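/- In the Case I setting, let I' be the two-sided *-ideal of Pol(O_F^+) generated by all entries of the blocks C_{ρμ} (1 ≤ ρ,μ ≤ r), X_μ and R_μ (1 ≤ μ ≤ r), and A_{ρμ} with ρ ≠ μ. Then Pol(O_F^+)/I' is *-isomorphic to the universal unital complex *-algebra generated by families a^{(ν)}_{jk} (ν = 1,…,r, 1 ≤ j,k ≤ M_ν) and z_{pq} (1 ≤ p,q ≤ N−2K) subject to: for each ν, both A_ν = (a^{(ν)}_{jk}) and conj(A_ν) = ((a^{(ν)}_{jk})^*) are unitary; z_{pq}^* = z_{pq}; and Z·Zᵗ = I_{N−2K} = Zᵗ·Z for Z = (z_{pq}). The isomorphism sends the class of an entry of A_{νν} to the corresponding a^{(ν)}_{jk} and the class of an entry of (u_{jk})_{j,k∈T} to the corresponding z_{pq}. (This presented algebra is the free product (⋆_{ν=1}^r Pol(U_{M_ν}^+)) ⋆ Pol(O_{N−2K}^+).) -/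

import Mathlib

open scoped ComplexOrder

/-- The defining relations of `Pol(O_F⁺)`: `U` is unitary and `U·F = F·conj(U)`
(equivalently `U = F·conj(U)·F⁻¹`). -/
def OrthRel {ι : Type} [Fintype ι] [DecidableEq ι] {A : Type} [Ring A] [Algebra ℂ A]
    [StarRing A] (F : Matrix ι ι ℂ) (u : Matrix ι ι A) : Prop :=
  u * u.conjTranspose = 1 ∧ u.conjTranspose * u = 1 ∧
    u * F.map (algebraMap ℂ A) = F.map (algebraMap ℂ A) * u.map star

/-- A presentation of the universal unital complex *-algebra `Pol(O_F⁺)`: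
a unital complex *-algebra carrying a matrix of generators `u` satisfying the
defining relations, universal among all such. -/
structure PolO {ι : Type} [Fintype ι] [DecidableEq ι] (F : Matrix ι ι ℂ) where
  carrier : Type
  [isRing : Ring carrier]
  [isAlgebra : Algebra ℂ carrier]
  [isStarRing : StarRing carrier]
  [isStarModule : StarModule ℂ carrier]
  u : Matrix ι ι carrier
  rel : OrthRel F u
  universal : ∀ (B : Type) [Ring B] [Algebra ℂ B] [StarRing B] [StarModule ℂ B]
      (v : Matrix ι ι B), OrthRel F v →
      ∃! φ : carrier →⋆ₐ[ℂ] B, ∀ j k, φ (u j k) = v j k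

attribute [instance] PolO.isRing PolO.isAlgebra PolO.isStarRing PolO.isStarModule

/-- The defining relations of `Pol(U_N⁺)`: both `U` and `conj(U)` are unitary. -/
def BiUnitary {ι : Type} [Fintype ι] [DecidableEq ι] {A : Type} [Ring A] [Algebra ℂ A]
    [StarRing A] (u : Matrix ι ι A) : Prop :=
  u * u.conjTranspose = 1 ∧ u.conjTranspose * u = 1 ∧
    u.map star * (u.map star).conjTranspose = 1 ∧ (u.map star).conjTranspose * u.map star = 1

/-- A presentation of the universal unital complex *-algebra `Pol(U_N⁺)` (`N = #ι`). -/
structure PolU (ι : Type) [Fintype ι] [DecidableEq ι] where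
  carrier : Type
  [isRing : Ring carrier]
  [isAlgebra : Algebra ℂ carrier]
  [isStarRing : StarRing carrier]
  [isStarModule : StarModule ℂ carrier]
  u : Matrix ι ι carrier
  rel : BiUnitary u
  universal : ∀ (B : Type) [Ring B] [Algebra ℂ B] [StarRing B] [StarModule ℂ B]
      (v : Matrix ι ι B), BiUnitary v →
      ∃! φ : carrier →⋆ₐ[ℂ] B, ∀ j k, φ (u j k) = v j k

attribute [instance] PolU.isRing PolU.isAlgebra PolU.isStarRing PolU.isStarModule

/-- A unital complex *-algebra is RFD if finite-dimensional *-representations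
separate its points. -/
def IsRFD (A : Type) [Ring A] [Algebra ℂ A] [StarRing A] : Prop :=
  ∀ a : A, a ≠ 0 → ∃ (n : ℕ) (π : A →⋆ₐ[ℂ] Matrix (Fin n) (Fin n) ℂ), π a ≠ 0

/-- A tracial state on a unital complex *-algebra. -/
structure TracialState (A : Type) [Ring A] [Algebra ℂ A] [StarRing A] where
  toFun : A →ₗ[ℂ] ℂ
  map_one' : toFun 1 = 1
  nonneg' : ∀ a : A, 0 ≤ toFun (star a * a)
  tracial' : ∀ a b : A, toFun (a * b) = toFun (b * a)

/-- The Kac ideal: elements killed by `τ(a^* a)` for every tracial state `τ`. -/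
def kacIdeal (A : Type) [Ring A] [Algebra ℂ A] [StarRing A] : Set A :=
  {a : A | ∀ τ : TracialState A, τ.toFun (star a * a) = 0}

/-- The RFD ideal: the intersection of the kernels of all finite-dimensional
*-representations. -/
def rfdIdeal (A : Type) [Ring A] [Algebra ℂ A] [StarRing A] : Set A :=
  {a : A | ∀ (n : ℕ) (π : A →⋆ₐ[ℂ] Matrix (Fin n) (Fin n) ℂ), π a = 0}

/-- A subset of a *-ring which is a two-sided ideal closed under the star operation. -/
def IsStarIdeal {A : Type} [Ring A] [StarRing A] (T : Set A) : Prop :=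
  (0 : A) ∈ T ∧ (∀ a b, a ∈ T → b ∈ T → a + b ∈ T) ∧
    (∀ x a, a ∈ T → x * a ∈ T ∧ a * x ∈ T) ∧ (∀ a, a ∈ T → star a ∈ T)

/-- The two-sided *-ideal generated by a set. -/
def starIdealSpan {A : Type} [Ring A] [StarRing A] (S : Set A) : Set A :=
  ⋂₀ {T : Set A | IsStarIdeal T ∧ S ⊆ T}

/-- The index set in the Case I setting: for each `ν = 1,…,r` a block `P_ν ⊕ Q_ν` of size
`2M_ν`, followed by a set `T` of size `s = N − 2K`. -/
abbrev CaseIIdx (r : ℕ) (M : Fin r → ℕ) (s : ℕ) : Type :=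
  (Σ ν : Fin r, (Fin (M ν) ⊕ Fin (M ν))) ⊕ Fin s

/-- The Case I matrix `F`: block-diagonal with blocks `[[0, q_ν·I_{M_ν}], [q_ν⁻¹·I_{M_ν}, 0]]`
for `ν = 1,…,r`, followed by the identity `I_{N−2K}`. -/
noncomputable def FCaseI (r : ℕ) (q : Fin r → ℝ) (M : Fin r → ℕ) (s : ℕ) :
    Matrix (CaseIIdx r M s) (CaseIIdx r M s) ℂ := fun a b =>
  match a, b with
  | .inl ⟨ν, .inl j⟩, .inl ⟨μ, .inr k⟩ =>
      if ν = μ ∧ (j : ℕ) = (k : ℕ) then ((q ν : ℝ) : ℂ) else 0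
  | .inl ⟨ν, .inr j⟩, .inl ⟨μ, .inl k⟩ =>
      if ν = μ ∧ (j : ℕ) = (k : ℕ) then (((q ν)⁻¹ : ℝ) : ℂ) else 0
  | .inr p, .inr t => if p = t then 1 else 0
  | _, _ => 0

/-- A presentation of the free product `(⋆_{ν=1}^r Pol(U⁺_{M_ν})) ⋆ Pol(O⁺_{N−2K})`:
the universal unital complex *-algebra generated by families `a⁽ᵛ⁾` with `A_ν` and
`conj(A_ν)` unitary, and `z` with self-adjoint entries and `Z·Zᵗ = I = Zᵗ·Z`. -/
structure FreeProdUO (r : ℕ) (M : Fin r → ℕ) (s : ℕ) where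
  carrier : Type
  [isRing : Ring carrier]
  [isAlgebra : Algebra ℂ carrier]
  [isStarRing : StarRing carrier]
  [isStarModule : StarModule ℂ carrier]
  a : ∀ ν : Fin r, Matrix (Fin (M ν)) (Fin (M ν)) carrier
  z : Matrix (Fin s) (Fin s) carrier
  rel_a : ∀ ν, BiUnitary (a ν)
  rel_z_star : ∀ p t, star (z p t) = z p t
  rel_z : z * z.transpose = 1 ∧ z.transpose * z = 1
  universal : ∀ (B : Type) [Ring B] [Algebra ℂ B] [StarRing B] [StarModule ℂ B]
      (b : ∀ ν : Fin r, Matrix (Fin (M ν)) (Fin (M ν)) B) (w : Matrix (Fin s) (Fin s) B),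
      (∀ ν, BiUnitary (b ν)) → (∀ p t, star (w p t) = w p t) →
      w * w.transpose = 1 → w.transpose * w = 1 →
      ∃! φ : carrier →⋆ₐ[ℂ] B,
        (∀ ν j k, φ (a ν j k) = b ν j k) ∧ ∀ p t, φ (z p t) = w p t

attribute [instance] FreeProdUO.isRing FreeProdUO.isAlgebra FreeProdUO.isStarRing
  FreeProdUO.isStarModule

namespace CaseIProof

open Matrix

section StarIdealLemmas

variable {A : Type} [Ring A] [StarRing A]

theorem isStarIdeal_span (S : Set A) : IsStarIdeal (starIdealSpan S) := by
  refine ⟨fun T hT => hT.1.1, fun a b ha hb T hT => hT.1.2.1 a b (ha T hT) (hb T hT),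
    fun x a ha => ⟨fun T hT => (hT.1.2.2.1 x a (ha T hT)).1,
      fun T hT => (hT.1.2.2.1 x a (ha T hT)).2⟩,
    fun a ha T hT => hT.1.2.2.2 a (ha T hT)⟩

theorem subset_span (S : Set A) : S ⊆ starIdealSpan S :=
  fun _x hx _T hT => hT.2 hx

theorem span_subset {S T : Set A} (hT : IsStarIdeal T) (hS : S ⊆ T) :
    starIdealSpan S ⊆ T :=
  Set.sInter_subset_of_mem ⟨hT, hS⟩

theorem isStarIdeal_ker {B : Type} [Ring B] [Algebra ℂ A] [Algebra ℂ B] [StarRing B]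
    (f : A →⋆ₐ[ℂ] B) : IsStarIdeal {x : A | f x = 0} := by
  refine ⟨map_zero f, fun a b ha hb => ?_, fun x a ha => ⟨?_, ?_⟩, fun a ha => ?_⟩
  · simp only [Set.mem_setOf_eq] at *
    rw [map_add, ha, hb, add_zero]
  · simp only [Set.mem_setOf_eq] at *
    rw [_root_.map_mul, ha, mul_zero]
  · simp only [Set.mem_setOf_eq] at *
    rw [_root_.map_mul, ha, zero_mul]
  · simp only [Set.mem_setOf_eq] at *
    rw [map_star, ha, star_zero]

end StarIdealLemmas

section Quot

variable {A : Type} [Ring A] [Algebra ℂ A] [StarRing A] [StarModule ℂ A]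

/-- The ring congruence associated to a two-sided star ideal. -/
def idealCon (I : Set A) (hI : IsStarIdeal I) : RingCon A where
  r a b := a - b ∈ I
  iseqv :=
    { refl := fun a => by simpa using hI.1
      symm := fun {a b} h => by
        have := (hI.2.2.1 (-1) _ h).1
        simpa [neg_sub] using this
      trans := fun {a b c} h1 h2 => by
        have := hI.2.1 _ _ h1 h2
        simpa using this }
  mul' := fun {w x y z} h1 h2 => by
    have m1 := (hI.2.2.1 w _ h2).1
    have m2 := (hI.2.2.1 z _ h1).2
    have := hI.2.1 _ _ m1 m2
    simpa [mul_sub, sub_mul, sub_add_sub_cancel] using this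
  add' := fun {w x y z} h1 h2 => by
    have := hI.2.1 _ _ h1 h2
    simpa [sub_add_sub_comm] using this

/-- Package: quotient of a unital complex star algebra by a two-sided star ideal. -/
structure QuotPack (I : Set A) : Type 1 where
  Q : Type
  [ring : Ring Q]
  [alg : Algebra ℂ Q]
  [sr : StarRing Q]
  [sm : StarModule ℂ Q]
  π : A →⋆ₐ[ℂ] Q
  ker : ∀ x : A, π x = 0 ↔ x ∈ I

attribute [instance] QuotPack.ring QuotPack.alg QuotPack.sr QuotPack.sm

noncomputable def quotPack (I : Set A) (hI : IsStarIdeal I) : QuotPack I := by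
  classical
  set c := idealCon I hI with hc
  have hstar : ∀ a b : A, c a b → c (star a) (star b) := by
    intro a b h
    show star a - star b ∈ I
    rw [← star_sub]
    exact hI.2.2.2 _ h
  letI instStar : Star c.Quotient := ⟨Quotient.map' star hstar⟩
  letI instSM : StarMul c.Quotient :=
    { star_involutive := fun x => Quotient.inductionOn' x fun a =>
        congrArg (fun t : A => (t : c.Quotient)) (star_star a)
      star_mul := fun x y => Quotient.inductionOn₂' x y fun a b =>
        congrArg (fun t : A => (t : c.Quotient)) (star_mul a b) }
  letI instSR : StarRing c.Quotient :=
    { toStarMul := instSM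
      star_add := fun x y => Quotient.inductionOn₂' x y fun a b =>
        congrArg (fun t : A => (t : c.Quotient)) (star_add a b) }
  letI instAlg : Algebra ℂ c.Quotient :=
    { algebraMap := c.mk'.comp (algebraMap ℂ A)
      smul := fun z x => z • x
      commutes' := by
        intro z x
        induction x using Quotient.inductionOn' with
        | h a => exact congrArg (fun t : A => (t : c.Quotient)) (Algebra.commutes z a)
      smul_def' := by
        intro z x
        induction x using Quotient.inductionOn' with
        | h a => exact congrArg (fun t : A => (t : c.Quotient)) (Algebra.smul_def z a) }
  letI instSMod : StarModule ℂ c.Quotient := by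
    constructor
    intro z x
    induction x using Quotient.inductionOn' with
    | h a => exact congrArg (fun t : A => (t : c.Quotient)) (star_smul z a)
  refine { Q := c.Quotient
           π := { toFun := fun a => (a : c.Quotient)
                  map_one' := rfl
                  map_mul' := fun a b => rfl
                  map_zero' := rfl
                  map_add' := fun a b => rfl
                  commutes' := fun z => rfl
                  map_star' := fun a => rfl }
           ker := ?_ }
  intro x
  refine Iff.trans (show ((x : A) : c.Quotient) = ((0 : A) : c.Quotient) ↔ c x 0 from c.eq)
    ?_
  show x - 0 ∈ I ↔ x ∈ I
  rw [sub_zero]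

end Quot

end CaseIProof
namespace CaseIProof

open Matrix

section MapLemmas

variable {ι : Type} [Fintype ι] [DecidableEq ι]
variable {A : Type} [Ring A] [Algebra ℂ A] [StarRing A] [StarModule ℂ A]
variable {B : Type} [Ring B] [Algebra ℂ B] [StarRing B] [StarModule ℂ B]

theorem mapMat_mul (f : A →⋆ₐ[ℂ] B) (X Y : Matrix ι ι A) :
    (X * Y).map ⇑f = X.map ⇑f * Y.map ⇑f := by
  ext i j
  simp [Matrix.mul_apply, map_sum]

theorem mapMat_one (f : A →⋆ₐ[ℂ] B) : (1 : Matrix ι ι A).map ⇑f = 1 := by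
  ext i j
  simp [Matrix.one_apply, apply_ite ⇑f]

theorem mapMat_ct (f : A →⋆ₐ[ℂ] B) (X : Matrix ι ι A) :
    (X.map ⇑f)ᴴ = Xᴴ.map ⇑f := by
  ext i j
  simp [Matrix.conjTranspose_apply, map_star]

theorem mapMat_t {m n : Type} (f : A →⋆ₐ[ℂ] B) (X : Matrix m n A) :
    (X.map ⇑f)ᵀ = Xᵀ.map ⇑f := by
  ext i j
  simp

theorem mapMat_star (f : A →⋆ₐ[ℂ] B) (X : Matrix ι ι A) :
    (X.map star).map ⇑f = (X.map ⇑f).map star := by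
  ext i j
  simp [map_star]

theorem mapMat_alg (f : A →⋆ₐ[ℂ] B) (F : Matrix ι ι ℂ) :
    (F.map (algebraMap ℂ A)).map ⇑f = F.map (algebraMap ℂ B) := by
  ext i j
  simp [AlgHomClass.commutes]

theorem orthRel_map {F : Matrix ι ι ℂ} {u : Matrix ι ι A} (f : A →⋆ₐ[ℂ] B)
    (h : OrthRel F u) : OrthRel F (u.map ⇑f) := by
  refine ⟨?_, ?_, ?_⟩
  · rw [mapMat_ct, ← mapMat_mul, h.1, mapMat_one]
  · rw [mapMat_ct, ← mapMat_mul, h.2.1, mapMat_one]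
  · rw [← mapMat_alg f F, ← mapMat_mul, h.2.2, mapMat_mul, mapMat_star]

theorem mapMat_inj (f : A →⋆ₐ[ℂ] B) (hf : Function.Injective ⇑f)
    {X Y : Matrix ι ι A} (h : X.map ⇑f = Y.map ⇑f) : X = Y := by
  ext i j
  exact hf (congrFun (congrFun h i) j)

theorem biUnitary_reflect (f : A →⋆ₐ[ℂ] B) (hf : Function.Injective ⇑f)
    {v : Matrix ι ι A} (h : BiUnitary (v.map ⇑f)) : BiUnitary v := by
  obtain ⟨h1, h2, h3, h4⟩ := h
  refine ⟨mapMat_inj f hf ?_, mapMat_inj f hf ?_, mapMat_inj f hf ?_, mapMat_inj f hf ?_⟩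
  · rw [mapMat_mul, ← mapMat_ct, h1, mapMat_one]
  · rw [mapMat_mul, ← mapMat_ct, h2, mapMat_one]
  · rw [mapMat_mul, ← mapMat_ct, mapMat_star, h3, mapMat_one]
  · rw [mapMat_mul, ← mapMat_ct, mapMat_star, h4, mapMat_one]

theorem orthog_reflect (f : A →⋆ₐ[ℂ] B) (hf : Function.Injective ⇑f)
    {w : Matrix ι ι A} (h1 : w.map ⇑f * (w.map ⇑f)ᵀ = 1) (h2 : (w.map ⇑f)ᵀ * w.map ⇑f = 1) :
    w * wᵀ = 1 ∧ wᵀ * w = 1 := by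
  constructor
  · refine mapMat_inj f hf ?_
    rw [mapMat_mul, ← mapMat_t, h1, mapMat_one]
  · refine mapMat_inj f hf ?_
    rw [mapMat_mul, ← mapMat_t, h2, mapMat_one]

end MapLemmas

end CaseIProof
set_option linter.unusedSectionVars false

namespace CaseIProof

open Matrix

section FStruct

variable {A : Type} [Ring A] [Algebra ℂ A] [StarRing A] [StarModule ℂ A]
variable {r : ℕ} {q : Fin r → ℝ} {M : Fin r → ℕ} {s : ℕ}

/-- The scalar middle block of `F`. -/
noncomputable def Gblk (q : Fin r → ℝ) (M : Fin r → ℕ) (ν : Fin r) :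
    Matrix (Fin (M ν) ⊕ Fin (M ν)) (Fin (M ν) ⊕ Fin (M ν)) A :=
  Matrix.fromBlocks 0 (((q ν : ℝ) : ℂ) • 1) ((((q ν)⁻¹ : ℝ) : ℂ) • 1) 0

theorem F_struct :
    (FCaseI r q M s).map (algebraMap ℂ A) =
      Matrix.fromBlocks (Matrix.blockDiagonal' fun ν => (Gblk q M ν : Matrix _ _ A)) 0 0 1 := by
  ext a b
  rcases a with ⟨ν, j | j⟩ | t <;> rcases b with ⟨μ, k | k⟩ | t'
  · rcases eq_or_ne ν μ with rfl | hνμ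
    · simp [FCaseI, Gblk, Matrix.blockDiagonal'_apply_eq]
    · simp [FCaseI, Gblk, Matrix.blockDiagonal'_apply_ne _ _ _ hνμ]
  · rcases eq_or_ne ν μ with rfl | hνμ
    · by_cases hjk : j = k
      · subst hjk
        simp [FCaseI, Gblk, Matrix.blockDiagonal'_apply_eq, Matrix.one_apply,
          Algebra.algebraMap_eq_smul_one]
      · simp [FCaseI, Gblk, Matrix.blockDiagonal'_apply_eq, Matrix.one_apply, hjk,
          Fin.val_inj]
    · simp [FCaseI, Gblk, Matrix.blockDiagonal'_apply_ne _ _ _ hνμ, hνμ]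
  · simp [FCaseI]
  · rcases eq_or_ne ν μ with rfl | hνμ
    · by_cases hjk : j = k
      · subst hjk
        simp [FCaseI, Gblk, Matrix.blockDiagonal'_apply_eq, Matrix.one_apply,
          Algebra.algebraMap_eq_smul_one]
      · simp [FCaseI, Gblk, Matrix.blockDiagonal'_apply_eq, Matrix.one_apply, hjk,
          Fin.val_inj]
    · simp [FCaseI, Gblk, Matrix.blockDiagonal'_apply_ne _ _ _ hνμ, hνμ]
  · rcases eq_or_ne ν μ with rfl | hνμ
    · simp [FCaseI, Gblk, Matrix.blockDiagonal'_apply_eq]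
    · simp [FCaseI, Gblk, Matrix.blockDiagonal'_apply_ne _ _ _ hνμ]
  · simp [FCaseI]
  · simp [FCaseI]
  · simp [FCaseI]
  · by_cases htt : t = t'
    · subst htt
      simp [FCaseI, Matrix.one_apply]
    · simp [FCaseI, Matrix.one_apply, htt]

theorem mulF_PL (X : Matrix (CaseIIdx r M s) (CaseIIdx r M s) A) (a : CaseIIdx r M s)
    (μ : Fin r) (k : Fin (M μ)) :
    (X * (FCaseI r q M s).map (algebraMap ℂ A)) a (.inl ⟨μ, .inl k⟩)
      = X a (.inl ⟨μ, .inr k⟩) * algebraMap ℂ A ((((q μ)⁻¹ : ℝ)) : ℂ) := by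
  rw [Matrix.mul_apply]
  refine (Fintype.sum_eq_single (Sum.inl ⟨μ, Sum.inr k⟩ : CaseIIdx r M s) ?_).trans ?_
  · rintro (⟨ν, j | j⟩ | t) hc
    · simp [Matrix.map_apply, FCaseI]
    · have hcond : ¬(ν = μ ∧ (j : ℕ) = (k : ℕ)) := by
        rintro ⟨rfl, h2⟩
        exact hc (by rw [Fin.val_inj] at h2; rw [h2])
      simp [Matrix.map_apply, FCaseI, hcond]
    · simp [Matrix.map_apply, FCaseI]
  · simp [Matrix.map_apply, FCaseI]

theorem mulF_QL (X : Matrix (CaseIIdx r M s) (CaseIIdx r M s) A) (a : CaseIIdx r M s)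
    (μ : Fin r) (k : Fin (M μ)) :
    (X * (FCaseI r q M s).map (algebraMap ℂ A)) a (.inl ⟨μ, .inr k⟩)
      = X a (.inl ⟨μ, .inl k⟩) * algebraMap ℂ A (((q μ : ℝ)) : ℂ) := by
  rw [Matrix.mul_apply]
  refine (Fintype.sum_eq_single (Sum.inl ⟨μ, Sum.inl k⟩ : CaseIIdx r M s) ?_).trans ?_
  · rintro (⟨ν, j | j⟩ | t) hc
    · have hcond : ¬(ν = μ ∧ (j : ℕ) = (k : ℕ)) := by
        rintro ⟨rfl, h2⟩
        exact hc (by rw [Fin.val_inj] at h2; rw [h2])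
      simp [Matrix.map_apply, FCaseI, hcond]
    · simp [Matrix.map_apply, FCaseI]
    · simp [Matrix.map_apply, FCaseI]
  · simp [Matrix.map_apply, FCaseI]

theorem mulF_T (X : Matrix (CaseIIdx r M s) (CaseIIdx r M s) A) (a : CaseIIdx r M s)
    (t : Fin s) :
    (X * (FCaseI r q M s).map (algebraMap ℂ A)) a (.inr t) = X a (.inr t) := by
  rw [Matrix.mul_apply]
  refine (Fintype.sum_eq_single (Sum.inr t : CaseIIdx r M s) ?_).trans ?_
  · rintro (⟨ν, j | j⟩ | t') hc
    · simp [Matrix.map_apply, FCaseI]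
    · simp [Matrix.map_apply, FCaseI]
    · have : t' ≠ t := fun h => hc (by rw [h])
      simp [Matrix.map_apply, FCaseI, this]
  · simp [Matrix.map_apply, FCaseI]

theorem Fmul_P (X : Matrix (CaseIIdx r M s) (CaseIIdx r M s) A) (b : CaseIIdx r M s)
    (ν : Fin r) (j : Fin (M ν)) :
    ((FCaseI r q M s).map (algebraMap ℂ A) * X) (.inl ⟨ν, .inl j⟩) b
      = algebraMap ℂ A (((q ν : ℝ)) : ℂ) * X (.inl ⟨ν, .inr j⟩) b := by
  rw [Matrix.mul_apply]
  refine (Fintype.sum_eq_single (Sum.inl ⟨ν, Sum.inr j⟩ : CaseIIdx r M s) ?_).trans ?_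
  · rintro (⟨μ, k | k⟩ | t) hc
    · simp [Matrix.map_apply, FCaseI]
    · have hcond : ¬(ν = μ ∧ (j : ℕ) = (k : ℕ)) := by
        rintro ⟨rfl, h2⟩
        exact hc (by rw [Fin.val_inj] at h2; rw [h2])
      simp [Matrix.map_apply, FCaseI, hcond]
    · simp [Matrix.map_apply, FCaseI]
  · simp [Matrix.map_apply, FCaseI]

theorem Fmul_Q (X : Matrix (CaseIIdx r M s) (CaseIIdx r M s) A) (b : CaseIIdx r M s)
    (ν : Fin r) (j : Fin (M ν)) :
    ((FCaseI r q M s).map (algebraMap ℂ A) * X) (.inl ⟨ν, .inr j⟩) b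
      = algebraMap ℂ A ((((q ν)⁻¹ : ℝ)) : ℂ) * X (.inl ⟨ν, .inl j⟩) b := by
  rw [Matrix.mul_apply]
  refine (Fintype.sum_eq_single (Sum.inl ⟨ν, Sum.inl j⟩ : CaseIIdx r M s) ?_).trans ?_
  · rintro (⟨μ, k | k⟩ | t) hc
    · have hcond : ¬(ν = μ ∧ (j : ℕ) = (k : ℕ)) := by
        rintro ⟨rfl, h2⟩
        exact hc (by rw [Fin.val_inj] at h2; rw [h2])
      simp [Matrix.map_apply, FCaseI, hcond]
    · simp [Matrix.map_apply, FCaseI]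
    · simp [Matrix.map_apply, FCaseI]
  · simp [Matrix.map_apply, FCaseI]

theorem Fmul_T (X : Matrix (CaseIIdx r M s) (CaseIIdx r M s) A) (b : CaseIIdx r M s)
    (t : Fin s) :
    ((FCaseI r q M s).map (algebraMap ℂ A) * X) (.inr t) b = X (.inr t) b := by
  rw [Matrix.mul_apply]
  refine (Fintype.sum_eq_single (Sum.inr t : CaseIIdx r M s) ?_).trans ?_
  · rintro (⟨μ, k | k⟩ | t') hc
    · simp [Matrix.map_apply, FCaseI]
    · simp [Matrix.map_apply, FCaseI]
    · have : t' ≠ t := fun h => hc (by rw [h])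
      simp [Matrix.map_apply, FCaseI, this.symm]
  · simp [Matrix.map_apply, FCaseI]

end FStruct

end CaseIProof
namespace CaseIProof

open Matrix

section Blocks

variable {A : Type} [Ring A] [Algebra ℂ A] [StarRing A] [StarModule ℂ A]
variable {r : ℕ} {q : Fin r → ℝ} {M : Fin r → ℕ} {s : ℕ}

/-- The `2M×2M` block `diag(a, conj a)`. -/
def Wmat {m : Type} (a : Matrix m m A) : Matrix (m ⊕ m) (m ⊕ m) A :=
  Matrix.fromBlocks a 0 0 (a.map star)

/-- The structured matrix `diag(W_1, …, W_r, z)`. -/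
def Vmat (M : Fin r → ℕ) (s : ℕ) (a : ∀ ν : Fin r, Matrix (Fin (M ν)) (Fin (M ν)) A)
    (z : Matrix (Fin s) (Fin s) A) : Matrix (CaseIIdx r M s) (CaseIIdx r M s) A :=
  Matrix.fromBlocks (Matrix.blockDiagonal' fun ν => Wmat (a ν)) 0 0 z

variable {a : ∀ ν : Fin r, Matrix (Fin (M ν)) (Fin (M ν)) A} {z : Matrix (Fin s) (Fin s) A}

theorem Vmat_PP_diag (ν : Fin r) (j k : Fin (M ν)) :
    Vmat M s a z (.inl ⟨ν, .inl j⟩) (.inl ⟨ν, .inl k⟩) = a ν j k := by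
  simp [Vmat, Wmat, Matrix.blockDiagonal'_apply_eq]

theorem Vmat_PP_off {ν μ : Fin r} (h : ν ≠ μ) (j : Fin (M ν)) (k : Fin (M μ)) :
    Vmat M s a z (.inl ⟨ν, .inl j⟩) (.inl ⟨μ, .inl k⟩) = 0 := by
  simp [Vmat, Matrix.blockDiagonal'_apply_ne _ _ _ h]

theorem Vmat_PQ (ν μ : Fin r) (j : Fin (M ν)) (k : Fin (M μ)) :
    Vmat M s a z (.inl ⟨ν, .inl j⟩) (.inl ⟨μ, .inr k⟩) = 0 := by
  rcases eq_or_ne ν μ with rfl | h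
  · simp [Vmat, Wmat, Matrix.blockDiagonal'_apply_eq]
  · simp [Vmat, Matrix.blockDiagonal'_apply_ne _ _ _ h]

theorem Vmat_QP (ν μ : Fin r) (j : Fin (M ν)) (k : Fin (M μ)) :
    Vmat M s a z (.inl ⟨ν, .inr j⟩) (.inl ⟨μ, .inl k⟩) = 0 := by
  rcases eq_or_ne ν μ with rfl | h
  · simp [Vmat, Wmat, Matrix.blockDiagonal'_apply_eq]
  · simp [Vmat, Matrix.blockDiagonal'_apply_ne _ _ _ h]

theorem Vmat_QQ_diag (ν : Fin r) (j k : Fin (M ν)) :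
    Vmat M s a z (.inl ⟨ν, .inr j⟩) (.inl ⟨ν, .inr k⟩) = star (a ν j k) := by
  simp [Vmat, Wmat, Matrix.blockDiagonal'_apply_eq]

theorem Vmat_QQ_off {ν μ : Fin r} (h : ν ≠ μ) (j : Fin (M ν)) (k : Fin (M μ)) :
    Vmat M s a z (.inl ⟨ν, .inr j⟩) (.inl ⟨μ, .inr k⟩) = 0 := by
  simp [Vmat, Matrix.blockDiagonal'_apply_ne _ _ _ h]

theorem Vmat_PT (ν : Fin r) (j : Fin (M ν)) (t : Fin s) :
    Vmat M s a z (.inl ⟨ν, .inl j⟩) (.inr t) = 0 := by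
  simp [Vmat]

theorem Vmat_QT (ν : Fin r) (j : Fin (M ν)) (t : Fin s) :
    Vmat M s a z (.inl ⟨ν, .inr j⟩) (.inr t) = 0 := by
  simp [Vmat]

theorem Vmat_TP (t : Fin s) (μ : Fin r) (k : Fin (M μ)) :
    Vmat M s a z (.inr t) (.inl ⟨μ, .inl k⟩) = 0 := by
  simp [Vmat]

theorem Vmat_TQ (t : Fin s) (μ : Fin r) (k : Fin (M μ)) :
    Vmat M s a z (.inr t) (.inl ⟨μ, .inr k⟩) = 0 := by
  simp [Vmat]

theorem Vmat_TT (t t' : Fin s) : Vmat M s a z (.inr t) (.inr t') = z t t' := by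
  simp [Vmat]

theorem diagBlocks_mul {l m : Type} [Fintype l] [Fintype m]
    (X Y : Matrix l l A) (X' Y' : Matrix m m A) :
    Matrix.fromBlocks X 0 0 X' * Matrix.fromBlocks Y 0 0 Y'
      = Matrix.fromBlocks (X * Y) 0 0 (X' * Y') := by
  rw [Matrix.fromBlocks_multiply]
  simp

theorem fromBlocks_eq_one {l m : Type} [Fintype l] [Fintype m] [DecidableEq l] [DecidableEq m]
    {X : Matrix l l A} {Y : Matrix m m A} {B : Matrix l m A} {C : Matrix m l A}
    (h : Matrix.fromBlocks X B C Y = 1) : X = 1 ∧ Y = 1 := by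
  have h11 : Matrix.toBlocks₁₁ (1 : Matrix (l ⊕ m) (l ⊕ m) A) = 1 := by
    ext i j
    simp [Matrix.toBlocks₁₁, Matrix.one_apply]
  have h22 : Matrix.toBlocks₂₂ (1 : Matrix (l ⊕ m) (l ⊕ m) A) = 1 := by
    ext i j
    simp [Matrix.toBlocks₂₂, Matrix.one_apply]
  constructor
  · have := congrArg Matrix.toBlocks₁₁ h
    rwa [Matrix.toBlocks_fromBlocks₁₁, h11] at this
  · have := congrArg Matrix.toBlocks₂₂ h
    rwa [Matrix.toBlocks_fromBlocks₂₂, h22] at this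

theorem bd_eq_one {o : Type} [Fintype o] [DecidableEq o] {m' : o → Type}
    [∀ i, Fintype (m' i)] [∀ i, DecidableEq (m' i)]
    {W : ∀ i, Matrix (m' i) (m' i) A} (h : Matrix.blockDiagonal' W = 1) :
    ∀ i, W i = 1 := by
  intro i
  rw [← Matrix.blockDiagonal'_one] at h
  ext x y
  have := congrFun (congrFun h ⟨i, x⟩) ⟨i, y⟩
  simpa using this

theorem wmat_mul_ct {m : Type} [Fintype m] (a : Matrix m m A) :
    Wmat a * (Wmat a)ᴴ
      = Matrix.fromBlocks (a * aᴴ) 0 0 (a.map star * (a.map star)ᴴ) := by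
  unfold Wmat
  rw [Matrix.fromBlocks_conjTranspose]
  simp only [Matrix.conjTranspose_zero]
  rw [diagBlocks_mul]

theorem wmat_ct_mul {m : Type} [Fintype m] (a : Matrix m m A) :
    (Wmat a)ᴴ * Wmat a
      = Matrix.fromBlocks (aᴴ * a) 0 0 ((a.map star)ᴴ * a.map star) := by
  unfold Wmat
  rw [Matrix.fromBlocks_conjTranspose]
  simp only [Matrix.conjTranspose_zero]
  rw [diagBlocks_mul]

theorem vmat_mul_ct :
    Vmat M s a z * (Vmat M s a z)ᴴ
      = Matrix.fromBlocks
          (Matrix.blockDiagonal' fun ν => Wmat (a ν) * (Wmat (a ν))ᴴ) 0 0 (z * zᴴ) := by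
  unfold Vmat
  rw [Matrix.fromBlocks_conjTranspose, Matrix.blockDiagonal'_conjTranspose]
  simp only [Matrix.conjTranspose_zero]
  rw [diagBlocks_mul, Matrix.blockDiagonal'_mul]

theorem vmat_ct_mul :
    (Vmat M s a z)ᴴ * Vmat M s a z
      = Matrix.fromBlocks
          (Matrix.blockDiagonal' fun ν => (Wmat (a ν))ᴴ * Wmat (a ν)) 0 0 (zᴴ * z) := by
  unfold Vmat
  rw [Matrix.fromBlocks_conjTranspose, Matrix.blockDiagonal'_conjTranspose]
  simp only [Matrix.conjTranspose_zero]
  rw [diagBlocks_mul, Matrix.blockDiagonal'_mul]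

theorem mapstar_mapstar {m n : Type} (X : Matrix m n A) : (X.map star).map star = X := by
  ext i j
  simp

/-- unitarity of `Vmat` from the block relations. -/
theorem vmat_unitary (hA : ∀ ν, BiUnitary (a ν)) (hz1 : z * zᴴ = 1) (hz2 : zᴴ * z = 1) :
    Vmat M s a z * (Vmat M s a z)ᴴ = 1 ∧ (Vmat M s a z)ᴴ * Vmat M s a z = 1 := by
  constructor
  · rw [vmat_mul_ct]
    have hW : ∀ ν, Wmat (a ν) * (Wmat (a ν))ᴴ = 1 := fun ν => by
      rw [wmat_mul_ct, (hA ν).1, (hA ν).2.2.1, Matrix.fromBlocks_one]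
    rw [show (fun ν => Wmat (a ν) * (Wmat (a ν))ᴴ)
        = (1 : ∀ ν : Fin r, Matrix (Fin (M ν) ⊕ Fin (M ν)) (Fin (M ν) ⊕ Fin (M ν)) A) from
        funext hW]
    rw [Matrix.blockDiagonal'_one, hz1, Matrix.fromBlocks_one]
  · rw [vmat_ct_mul]
    have hW : ∀ ν, (Wmat (a ν))ᴴ * Wmat (a ν) = 1 := fun ν => by
      rw [wmat_ct_mul, (hA ν).2.1, (hA ν).2.2.2, Matrix.fromBlocks_one]
    rw [show (fun ν => (Wmat (a ν))ᴴ * Wmat (a ν))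
        = (1 : ∀ ν : Fin r, Matrix (Fin (M ν) ⊕ Fin (M ν)) (Fin (M ν) ⊕ Fin (M ν)) A) from
        funext hW]
    rw [Matrix.blockDiagonal'_one, hz2, Matrix.fromBlocks_one]

/-- block relations from unitarity of `Vmat`. -/
theorem vmat_unitary_rev (h1 : Vmat M s a z * (Vmat M s a z)ᴴ = 1)
    (h2 : (Vmat M s a z)ᴴ * Vmat M s a z = 1) :
    (∀ ν, BiUnitary (a ν)) ∧ z * zᴴ = 1 ∧ zᴴ * z = 1 := by
  rw [vmat_mul_ct] at h1
  rw [vmat_ct_mul] at h2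
  obtain ⟨hbd1, hz1⟩ := fromBlocks_eq_one h1
  obtain ⟨hbd2, hz2⟩ := fromBlocks_eq_one h2
  refine ⟨fun ν => ?_, hz1, hz2⟩
  have hW1 := bd_eq_one hbd1 ν
  have hW2 := bd_eq_one hbd2 ν
  rw [wmat_mul_ct] at hW1
  rw [wmat_ct_mul] at hW2
  obtain ⟨e1, e3⟩ := fromBlocks_eq_one hW1
  obtain ⟨e2, e4⟩ := fromBlocks_eq_one hW2
  exact ⟨e1, e2, e3, e4⟩

/-- The F-relation for `Vmat`, given `z` has self-adjoint entries. -/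
theorem vmat_Frel (hz : z.map star = z) :
    Vmat M s a z * (FCaseI r q M s).map (algebraMap ℂ A)
      = (FCaseI r q M s).map (algebraMap ℂ A) * (Vmat M s a z).map star := by
  have hWs : ∀ ν : Fin r, (Wmat (a ν)).map star
      = Matrix.fromBlocks ((a ν).map star) 0 0 (a ν) := fun ν => by
    unfold Wmat
    rw [Matrix.fromBlocks_map, mapstar_mapstar, Matrix.map_zero _ (star_zero A)]
  have hmap : (Vmat M s a z).map star
      = Matrix.fromBlocks
          (Matrix.blockDiagonal' fun ν =>
            (Matrix.fromBlocks ((a ν).map star) 0 0 (a ν) : Matrix _ _ A)) 0 0 z := by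
    unfold Vmat
    rw [Matrix.fromBlocks_map, Matrix.blockDiagonal'_map _ _ (star_zero A), hz,
      Matrix.map_zero _ (star_zero A), Matrix.map_zero _ (star_zero A)]
    simp only [hWs]
  have hkey : ∀ ν : Fin r, Wmat (a ν) * (Gblk q M ν : Matrix _ _ A)
      = (Gblk q M ν : Matrix _ _ A) * Matrix.fromBlocks ((a ν).map star) 0 0 (a ν) := by
    intro ν
    unfold Wmat Gblk
    rw [Matrix.fromBlocks_multiply, Matrix.fromBlocks_multiply]
    simp [Matrix.mul_smul, Matrix.smul_mul]
  rw [F_struct (A := A), hmap]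
  unfold Vmat
  rw [diagBlocks_mul, diagBlocks_mul, mul_one, one_mul, ← Matrix.blockDiagonal'_mul,
    ← Matrix.blockDiagonal'_mul]
  simp only [hkey]

end Blocks

end CaseIProof
namespace CaseIProof

open Matrix

section EntryIdentities

variable {r : ℕ} {q : Fin r → ℝ} {M : Fin r → ℕ} {s : ℕ}

theorem cc_inv_mul {A : Type} [Ring A] [Algebra ℂ A] (hq0 : ∀ ν, 0 < q ν) (μ : Fin r) :
    algebraMap ℂ A ((((q μ)⁻¹ : ℝ)) : ℂ) * algebraMap ℂ A (((q μ : ℝ)) : ℂ) = 1 := by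
  rw [← _root_.map_mul, ← Complex.ofReal_mul, inv_mul_cancel₀ (hq0 μ).ne',
    Complex.ofReal_one, _root_.map_one]

theorem cancel_right {A : Type} [Ring A] [Algebra ℂ A] (hq0 : ∀ ν, 0 < q ν)
    {x y : A} (μ : Fin r) (h : x * algebraMap ℂ A ((((q μ)⁻¹ : ℝ)) : ℂ) = y) :
    x = y * algebraMap ℂ A (((q μ : ℝ)) : ℂ) := by
  calc x = x * (algebraMap ℂ A ((((q μ)⁻¹ : ℝ)) : ℂ) * algebraMap ℂ A (((q μ : ℝ)) : ℂ)) := by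
        rw [cc_inv_mul hq0 μ, mul_one]
    _ = (x * algebraMap ℂ A ((((q μ)⁻¹ : ℝ)) : ℂ)) * algebraMap ℂ A (((q μ : ℝ)) : ℂ) := by
        rw [mul_assoc]
    _ = y * algebraMap ℂ A (((q μ : ℝ)) : ℂ) := by rw [h]

variable (P : PolO (FCaseI r q M s))

theorem e_B (hq0 : ∀ ν, 0 < q ν) (ν μ : Fin r) (j : Fin (M ν)) (k : Fin (M μ)) :
    P.u (.inl ⟨ν, .inl j⟩) (.inl ⟨μ, .inr k⟩)
      = algebraMap ℂ P.carrier (((q ν : ℝ)) : ℂ)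
          * star (P.u (.inl ⟨ν, .inr j⟩) (.inl ⟨μ, .inl k⟩))
          * algebraMap ℂ P.carrier (((q μ : ℝ)) : ℂ) := by
  have h := congrFun (congrFun P.rel.2.2 (Sum.inl ⟨ν, Sum.inl j⟩)) (Sum.inl ⟨μ, Sum.inl k⟩)
  rw [mulF_PL, Fmul_P, Matrix.map_apply] at h
  exact cancel_right hq0 μ h

theorem e_D (hq0 : ∀ ν, 0 < q ν) (ν μ : Fin r) (j : Fin (M ν)) (k : Fin (M μ)) :
    P.u (.inl ⟨ν, .inr j⟩) (.inl ⟨μ, .inr k⟩)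
      = algebraMap ℂ P.carrier ((((q ν)⁻¹ : ℝ)) : ℂ)
          * star (P.u (.inl ⟨ν, .inl j⟩) (.inl ⟨μ, .inl k⟩))
          * algebraMap ℂ P.carrier (((q μ : ℝ)) : ℂ) := by
  have h := congrFun (congrFun P.rel.2.2 (Sum.inl ⟨ν, Sum.inr j⟩)) (Sum.inl ⟨μ, Sum.inl k⟩)
  rw [mulF_PL, Fmul_Q, Matrix.map_apply] at h
  exact cancel_right hq0 μ h

theorem e_D_diag (hq0 : ∀ ν, 0 < q ν) (ν : Fin r) (j k : Fin (M ν)) :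
    P.u (.inl ⟨ν, .inr j⟩) (.inl ⟨ν, .inr k⟩)
      = star (P.u (.inl ⟨ν, .inl j⟩) (.inl ⟨ν, .inl k⟩)) := by
  rw [e_D P hq0 ν ν j k, mul_assoc, ← Algebra.commutes, ← mul_assoc, cc_inv_mul hq0 ν,
    one_mul]

theorem e_QT (ν : Fin r) (j : Fin (M ν)) (t : Fin s) :
    P.u (.inl ⟨ν, .inr j⟩) (.inr t)
      = algebraMap ℂ P.carrier ((((q ν)⁻¹ : ℝ)) : ℂ)
          * star (P.u (.inl ⟨ν, .inl j⟩) (.inr t)) := by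
  have h := congrFun (congrFun P.rel.2.2 (Sum.inl ⟨ν, Sum.inr j⟩)) (Sum.inr t)
  rwa [mulF_T, Fmul_Q, Matrix.map_apply] at h

theorem e_TQ (hq0 : ∀ ν, 0 < q ν) (t : Fin s) (μ : Fin r) (k : Fin (M μ)) :
    P.u (.inr t) (.inl ⟨μ, .inr k⟩)
      = star (P.u (.inr t) (.inl ⟨μ, .inl k⟩)) * algebraMap ℂ P.carrier (((q μ : ℝ)) : ℂ) := by
  have h := congrFun (congrFun P.rel.2.2 (Sum.inr t)) (Sum.inl ⟨μ, Sum.inl k⟩)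
  rw [mulF_PL, Fmul_T, Matrix.map_apply] at h
  exact cancel_right hq0 μ h

theorem e_TT (t t' : Fin s) :
    P.u (.inr t) (.inr t') = star (P.u (.inr t) (.inr t')) := by
  have h := congrFun (congrFun P.rel.2.2 (Sum.inr t)) (Sum.inr t')
  rwa [mulF_T, Fmul_T, Matrix.map_apply] at h

end EntryIdentities

end CaseIProof

open CaseIProof Matrix

/-- in the Case I setting, the quotient of `Pol(O_F⁺)` by the two-sided
*-ideal `I'` generated by all entries of the blocks `C_{ρμ}`, `X_μ`, `R_μ` and `A_{ρμ}`
(`ρ ≠ μ`) is *-isomorphic to `(⋆_{ν=1}^r Pol(U⁺_{M_ν})) ⋆ Pol(O⁺_{N−2K})`, the class of an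
entry of `A_{νν}` (resp. of `Z`) corresponding to `a⁽ᵛ⁾_{jk}` (resp. `z_{pq}`).  This is
expressed by a surjective unital *-homomorphism whose kernel is exactly `I'`. -/
theorem caseI_rfd_quotient_iso (r : ℕ) (hr : 1 ≤ r) (q : Fin r → ℝ) (hq0 : ∀ ν, 0 < q ν)
    (hq1 : ∀ ν, q ν < 1) (hmono : StrictMono q) (M : Fin r → ℕ) (hM : ∀ ν, 1 ≤ M ν)
    (s : ℕ) (P : PolO (FCaseI r q M s)) (B : FreeProdUO r M s) :
    ∃ φ : P.carrier →⋆ₐ[ℂ] B.carrier,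
      Function.Surjective φ ∧
      (∀ (ν : Fin r) (j k : Fin (M ν)),
        φ (P.u (.inl ⟨ν, .inl j⟩) (.inl ⟨ν, .inl k⟩)) = B.a ν j k) ∧
      (∀ p t : Fin s, φ (P.u (.inr p) (.inr t)) = B.z p t) ∧
      {x : P.carrier | φ x = 0} =
        starIdealSpan
          {x : P.carrier |
            (∃ (ρ μ : Fin r) (j : Fin (M ρ)) (k : Fin (M μ)),
              x = P.u (.inl ⟨ρ, .inr j⟩) (.inl ⟨μ, .inl k⟩)) ∨
            (∃ (μ : Fin r) (t : Fin s) (k : Fin (M μ)),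
              x = P.u (.inr t) (.inl ⟨μ, .inl k⟩)) ∨
            (∃ (μ : Fin r) (j : Fin (M μ)) (t : Fin s),
              x = P.u (.inl ⟨μ, .inl j⟩) (.inr t)) ∨
            ∃ (ρ μ : Fin r), ρ ≠ μ ∧ ∃ (j : Fin (M ρ)) (k : Fin (M μ)),
              x = P.u (.inl ⟨ρ, .inl j⟩) (.inl ⟨μ, .inl k⟩)} := by
  classical
  set SS : Set P.carrier :=
    {x : P.carrier |
        (∃ (ρ μ : Fin r) (j : Fin (M ρ)) (k : Fin (M μ)),
          x = P.u (.inl ⟨ρ, .inr j⟩) (.inl ⟨μ, .inl k⟩)) ∨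
        (∃ (μ : Fin r) (t : Fin s) (k : Fin (M μ)),
          x = P.u (.inr t) (.inl ⟨μ, .inl k⟩)) ∨
        (∃ (μ : Fin r) (j : Fin (M μ)) (t : Fin s),
          x = P.u (.inl ⟨μ, .inl j⟩) (.inr t)) ∨
        ∃ (ρ μ : Fin r), ρ ≠ μ ∧ ∃ (j : Fin (M ρ)) (k : Fin (M μ)),
          x = P.u (.inl ⟨ρ, .inl j⟩) (.inl ⟨μ, .inl k⟩)} with hSS
  have hI : IsStarIdeal (starIdealSpan SS) := isStarIdeal_span SS
  have hsub : SS ⊆ starIdealSpan SS := subset_span SS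
  have mC : ∀ (ρ μ : Fin r) (j : Fin (M ρ)) (k : Fin (M μ)),
      P.u (.inl ⟨ρ, .inr j⟩) (.inl ⟨μ, .inl k⟩) ∈ starIdealSpan SS :=
    fun ρ μ j k => hsub (Or.inl ⟨ρ, μ, j, k, rfl⟩)
  have mX : ∀ (μ : Fin r) (t : Fin s) (k : Fin (M μ)),
      P.u (.inr t) (.inl ⟨μ, .inl k⟩) ∈ starIdealSpan SS :=
    fun μ t k => hsub (Or.inr (Or.inl ⟨μ, t, k, rfl⟩))
  have mR : ∀ (μ : Fin r) (j : Fin (M μ)) (t : Fin s),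
      P.u (.inl ⟨μ, .inl j⟩) (.inr t) ∈ starIdealSpan SS :=
    fun μ j t => hsub (Or.inr (Or.inr (Or.inl ⟨μ, j, t, rfl⟩)))
  have mA : ∀ (ρ μ : Fin r), ρ ≠ μ → ∀ (j : Fin (M ρ)) (k : Fin (M μ)),
      P.u (.inl ⟨ρ, .inl j⟩) (.inl ⟨μ, .inl k⟩) ∈ starIdealSpan SS :=
    fun ρ μ h j k => hsub (Or.inr (Or.inr (Or.inr ⟨ρ, μ, h, j, k, rfl⟩)))
  have mB : ∀ (ν μ : Fin r) (j : Fin (M ν)) (k : Fin (M μ)),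
      P.u (.inl ⟨ν, .inl j⟩) (.inl ⟨μ, .inr k⟩) ∈ starIdealSpan SS := by
    intro ν μ j k
    rw [e_B P hq0 ν μ j k]
    exact (hI.2.2.1 _ _ (hI.2.2.1 _ _ (hI.2.2.2 _ (mC ν μ j k))).1).2
  have mD : ∀ (ν μ : Fin r), ν ≠ μ → ∀ (j : Fin (M ν)) (k : Fin (M μ)),
      P.u (.inl ⟨ν, .inr j⟩) (.inl ⟨μ, .inr k⟩) ∈ starIdealSpan SS := by
    intro ν μ h j k
    rw [e_D P hq0 ν μ j k]
    exact (hI.2.2.1 _ _ (hI.2.2.1 _ _ (hI.2.2.2 _ (mA ν μ h j k))).1).2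
  have mQT : ∀ (ν : Fin r) (j : Fin (M ν)) (t : Fin s),
      P.u (.inl ⟨ν, .inr j⟩) (.inr t) ∈ starIdealSpan SS := by
    intro ν j t
    rw [e_QT P ν j t]
    exact (hI.2.2.1 _ _ (hI.2.2.2 _ (mR ν j t))).1
  have mTQ : ∀ (t : Fin s) (μ : Fin r) (k : Fin (M μ)),
      P.u (.inr t) (.inl ⟨μ, .inr k⟩) ∈ starIdealSpan SS := by
    intro t μ k
    rw [e_TQ P hq0 t μ k]
    exact (hI.2.2.1 _ _ (hI.2.2.2 _ (mX μ t k))).2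
  -- the quotient
  let pk := quotPack (starIdealSpan SS) hI
  letI : Ring pk.Q := pk.ring
  letI : Algebra ℂ pk.Q := pk.alg
  letI : StarRing pk.Q := pk.sr
  letI : StarModule ℂ pk.Q := pk.sm
  have π0 : ∀ x ∈ starIdealSpan SS, pk.π x = 0 := fun x hx => (pk.ker x).2 hx
  let Aq : ∀ ν : Fin r, Matrix (Fin (M ν)) (Fin (M ν)) pk.Q :=
    fun ν j k => pk.π (P.u (.inl ⟨ν, .inl j⟩) (.inl ⟨ν, .inl k⟩))
  let Zq : Matrix (Fin s) (Fin s) pk.Q := fun p t => pk.π (P.u (.inr p) (.inr t))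
  have hAq_def : ∀ (ν : Fin r) (j k : Fin (M ν)),
      Aq ν j k = pk.π (P.u (.inl ⟨ν, .inl j⟩) (.inl ⟨ν, .inl k⟩)) := fun _ _ _ => rfl
  have hZq_def : ∀ p t : Fin s, Zq p t = pk.π (P.u (.inr p) (.inr t)) := fun _ _ => rfl
  have uq_struct : P.u.map ⇑pk.π = Vmat M s Aq Zq := by
    ext c d
    rcases c with ⟨ν, j | j⟩ | t <;> rcases d with ⟨μ, k | k⟩ | t'
    · rcases eq_or_ne ν μ with rfl | h
      · rw [Matrix.map_apply, Vmat_PP_diag, hAq_def]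
      · rw [Matrix.map_apply, Vmat_PP_off h]
        exact π0 _ (mA ν μ h j k)
    · rw [Matrix.map_apply, Vmat_PQ]
      exact π0 _ (mB ν μ j k)
    · rw [Matrix.map_apply, Vmat_PT]
      exact π0 _ (mR ν j t')
    · rw [Matrix.map_apply, Vmat_QP]
      exact π0 _ (mC ν μ j k)
    · rcases eq_or_ne ν μ with rfl | h
      · rw [Matrix.map_apply, Vmat_QQ_diag, hAq_def, e_D_diag P hq0 ν j k, map_star]
      · rw [Matrix.map_apply, Vmat_QQ_off h]
        exact π0 _ (mD ν μ h j k)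
    · rw [Matrix.map_apply, Vmat_QT]
      exact π0 _ (mQT ν j t')
    · rw [Matrix.map_apply, Vmat_TP]
      exact π0 _ (mX μ t k)
    · rw [Matrix.map_apply, Vmat_TQ]
      exact π0 _ (mTQ t μ k)
    · rw [Matrix.map_apply, Vmat_TT, hZq_def]
  have orth_q : OrthRel (FCaseI r q M s) (P.u.map ⇑pk.π) := orthRel_map pk.π P.rel
  obtain ⟨hAq_bi, hZq1, hZq2⟩ :=
    vmat_unitary_rev (a := Aq) (z := Zq)
      (by rw [← uq_struct]; exact orth_q.1) (by rw [← uq_struct]; exact orth_q.2.1)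
  have hZq_sa : ∀ p t : Fin s, star (Zq p t) = Zq p t := fun p t => by
    rw [hZq_def, ← map_star, ← e_TT P p t]
  have hZqT : Zqᴴ = Zqᵀ := by
    ext p t
    rw [Matrix.conjTranspose_apply, Matrix.transpose_apply, hZq_sa t p]
  have hZqt1 : Zq * Zqᵀ = 1 := by rw [← hZqT]; exact hZq1
  have hZqt2 : Zqᵀ * Zq = 1 := by rw [← hZqT]; exact hZq2
  obtain ⟨ψ, ⟨hψa, hψz⟩, -⟩ := B.universal pk.Q Aq Zq hAq_bi hZq_sa hZqt1 hZqt2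
  -- the homomorphism φ
  have horthv : OrthRel (FCaseI r q M s) (Vmat M s B.a B.z) := by
    have hbz : B.z.map star = B.z := by
      ext p t
      rw [Matrix.map_apply, B.rel_z_star]
    have hzH : B.zᴴ = B.zᵀ := by
      ext p t
      rw [Matrix.conjTranspose_apply, Matrix.transpose_apply, B.rel_z_star]
    have h1 := vmat_unitary (M := M) (s := s) (a := B.a) (z := B.z) B.rel_a
      (by rw [hzH]; exact B.rel_z.1) (by rw [hzH]; exact B.rel_z.2)
    exact ⟨h1.1, h1.2, vmat_Frel hbz⟩
  obtain ⟨φ, hφ, -⟩ := P.universal B.carrier (Vmat M s B.a B.z) horthv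
  have hφA : ∀ (ν : Fin r) (j k : Fin (M ν)),
      φ (P.u (.inl ⟨ν, .inl j⟩) (.inl ⟨ν, .inl k⟩)) = B.a ν j k := fun ν j k => by
    rw [hφ, Vmat_PP_diag]
  have hφZ : ∀ p t : Fin s, φ (P.u (.inr p) (.inr t)) = B.z p t := fun p t => by
    rw [hφ, Vmat_TT]
  -- span ⊆ ker φ
  have hkφ : IsStarIdeal {x : P.carrier | φ x = 0} := isStarIdeal_ker φ
  have hSk : SS ⊆ {x : P.carrier | φ x = 0} := by
    rintro x (⟨ρ, μ, j, k, rfl⟩ | ⟨μ, t, k, rfl⟩ | ⟨μ, j, t, rfl⟩ | ⟨ρ, μ, h, j, k, rfl⟩)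
    · show φ _ = 0
      rw [hφ, Vmat_QP]
    · show φ _ = 0
      rw [hφ, Vmat_TP]
    · show φ _ = 0
      rw [hφ, Vmat_PT]
    · show φ _ = 0
      rw [hφ, Vmat_PP_off h]
  have hspan_ker : starIdealSpan SS ⊆ {x : P.carrier | φ x = 0} := span_subset hkφ hSk
  -- ψ ∘ φ = π
  obtain ⟨φ₀, -, huniq⟩ := P.universal pk.Q (P.u.map ⇑pk.π) orth_q
  have h1 : ψ.comp φ = φ₀ := by
    apply huniq
    intro c d
    rw [StarAlgHom.comp_apply, hφ, Matrix.map_apply]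
    rcases c with ⟨ν, j | j⟩ | t <;> rcases d with ⟨μ, k | k⟩ | t'
    · rcases eq_or_ne ν μ with rfl | h
      · rw [Vmat_PP_diag, hψa, hAq_def]
      · rw [Vmat_PP_off h, map_zero]
        exact (π0 _ (mA ν μ h j k)).symm
    · rw [Vmat_PQ, map_zero]
      exact (π0 _ (mB ν μ j k)).symm
    · rw [Vmat_PT, map_zero]
      exact (π0 _ (mR ν j t')).symm
    · rw [Vmat_QP, map_zero]
      exact (π0 _ (mC ν μ j k)).symm
    · rcases eq_or_ne ν μ with rfl | h
      · rw [Vmat_QQ_diag, map_star, hψa, hAq_def, ← map_star, ← e_D_diag P hq0 ν j k]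
      · rw [Vmat_QQ_off h, map_zero]
        exact (π0 _ (mD ν μ h j k)).symm
    · rw [Vmat_QT, map_zero]
      exact (π0 _ (mQT ν j t')).symm
    · rw [Vmat_TP, map_zero]
      exact (π0 _ (mX μ t k)).symm
    · rw [Vmat_TQ, map_zero]
      exact (π0 _ (mTQ t μ k)).symm
    · rw [Vmat_TT, hψz, hZq_def]
  have h2 : pk.π = φ₀ := huniq _ (fun c d => rfl)
  have hcomp : ψ.comp φ = pk.π := h1.trans h2.symm
  have hker_span : {x : P.carrier | φ x = 0} ⊆ starIdealSpan SS := by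
    intro x hx
    have hπx : pk.π x = 0 := by
      rw [← hcomp, StarAlgHom.comp_apply, show φ x = 0 from hx, map_zero]
    exact (pk.ker x).1 hπx
  -- surjectivity
  have memA : ∀ (ν : Fin r) (j k : Fin (M ν)), B.a ν j k ∈ φ.range := fun ν j k =>
    ⟨P.u (.inl ⟨ν, .inl j⟩) (.inl ⟨ν, .inl k⟩), hφA ν j k⟩
  have memZ : ∀ p t : Fin s, B.z p t ∈ φ.range := fun p t =>
    ⟨P.u (.inr p) (.inr t), hφZ p t⟩
  let a' : ∀ ν : Fin r, Matrix (Fin (M ν)) (Fin (M ν)) φ.range :=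
    fun ν j k => ⟨B.a ν j k, memA ν j k⟩
  let z' : Matrix (Fin s) (Fin s) φ.range := fun p t => ⟨B.z p t, memZ p t⟩
  have hsub_inj : Function.Injective ⇑φ.range.subtype := Subtype.coe_injective
  have ha'map : ∀ ν, (a' ν).map ⇑φ.range.subtype = B.a ν := fun ν => by
    ext j k
    rfl
  have hz'map : z'.map ⇑φ.range.subtype = B.z := by
    ext p t
    rfl
  have ha'rel : ∀ ν, BiUnitary (a' ν) := fun ν =>
    biUnitary_reflect φ.range.subtype hsub_inj (by rw [ha'map]; exact B.rel_a ν)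
  have hz'sa : ∀ p t, star (z' p t) = z' p t := fun p t => Subtype.ext (B.rel_z_star p t)
  have hz'rel := orthog_reflect φ.range.subtype hsub_inj (w := z')
    (by rw [hz'map]; exact B.rel_z.1) (by rw [hz'map]; exact B.rel_z.2)
  obtain ⟨ψ', ⟨hψ'a, hψ'z⟩, -⟩ := B.universal φ.range a' z' ha'rel hz'sa hz'rel.1 hz'rel.2
  obtain ⟨idB, -, hidu⟩ :=
    B.universal B.carrier B.a B.z B.rel_a B.rel_z_star B.rel_z.1 B.rel_z.2
  have e1 : φ.range.subtype.comp ψ' = idB :=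
    hidu _ ⟨fun ν j k => by rw [StarAlgHom.comp_apply, hψ'a]; rfl,
            fun p t => by rw [StarAlgHom.comp_apply, hψ'z]; rfl⟩
  have e2 : StarAlgHom.id ℂ B.carrier = idB := hidu _ ⟨fun ν j k => rfl, fun p t => rfl⟩
  have hsurj : Function.Surjective ⇑φ := by
    intro x
    have hx : (ψ' x : B.carrier) = x := DFunLike.congr_fun (e1.trans e2.symm) x
    obtain ⟨y, hy⟩ := (ψ' x).2
    exact ⟨y, hy.trans hx⟩
  exact ⟨φ, hsurj, hφA, hφZ, Set.Subset.antisymm hker_span hspan_ker⟩
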